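/- For n ≥ 2 and 1 ≤ k ≤ n define w_k on ℝ^n∖{0} by: w_k(x) = |x|^{2-n/k} if 2k > n; w_k(x) = log|x| if 2k = n; and w_k(x) = −|x|^{2-n/k} if 2k < n. Then w_k is smooth on ℝ^n∖{0}, and for every x ≠ 0 the eigenvalue vector λ = λ(D²w_k(x)) of the Hessian of w_k at x satisfies σ_j(λ) > 0 for all 1 ≤ j ≤ k−1 and σ_k(λ) = 0. In particular, w_k is k-admissible on ℝ^n∖{0} and solves the homogeneous k-Hessian equation S_k(D²w_k) = 0 there. -/

import Mathlib

noncomputable section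

/-- The j-th elementary symmetric polynomial of a vector in ℝⁿ. -/
def elemSym (n j : ℕ) (l : Fin n → ℝ) : ℝ :=
  ∑ s ∈ (Finset.univ : Finset (Fin n)).powersetCard j, ∏ i ∈ s, l i

/-- The Gårding cone Γ_k ⊂ ℝⁿ. -/
def GardingCone (n k : ℕ) : Set (Fin n → ℝ) :=
  {l | ∀ j, 1 ≤ j → j ≤ k → 0 < elemSym n j l}

/-- S_k(A) = σ_k(λ(A)): the k-th elementary symmetric function of the eigenvalues of a
real symmetric matrix (junk value 0 if A is not symmetric). -/
def SkEig (n k : ℕ) (A : Matrix (Fin n) (Fin n) ℝ) : ℝ :=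
  if h : A.IsHermitian then elemSym n k h.eigenvalues else 0

/-- The Hessian matrix of u : ℝⁿ → ℝ at x, with entries ∂ᵢ∂ⱼu(x). -/
def hessianMatrix (n : ℕ) (u : EuclideanSpace ℝ (Fin n) → ℝ)
    (x : EuclideanSpace ℝ (Fin n)) : Matrix (Fin n) (Fin n) ℝ :=
  fun i j => fderiv ℝ (fun y => fderiv ℝ u y (EuclideanSpace.single j (1 : ℝ))) x
    (EuclideanSpace.single i (1 : ℝ))

lemma my_esymm_cons (a : ℝ) (s : Multiset ℝ) (j : ℕ) :
    (a ::ₘ s).esymm (j + 1) = s.esymm (j + 1) + a * s.esymm j := by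
  simp only [Multiset.esymm, Multiset.powersetCard_cons, Multiset.map_add, Multiset.sum_add,
    Multiset.map_map, Function.comp_def, Multiset.prod_cons]
  rw [Multiset.sum_map_mul_left]

lemma my_esymm_replicate (μ : ℝ) : ∀ m j : ℕ, (Multiset.replicate m μ).esymm j = (m.choose j) * μ ^ j := by
  intro m
  induction m with
  | zero =>
    intro j
    cases j with
    | zero => simp [Multiset.esymm]
    | succ j => simp [Multiset.esymm, Multiset.replicate_zero, Multiset.powersetCard_zero_right]
  | succ m ih =>
    intro j
    cases j with
    | zero => simp [Multiset.esymm]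
    | succ j =>
      rw [Multiset.replicate_succ, my_esymm_cons, ih, ih, Nat.choose_succ_succ]
      push_cast
      ring

lemma my_elemSym_of_multiset (n : ℕ) (l : Fin n → ℝ) (μ ν : ℝ) (j : ℕ) (hj : 1 ≤ j)
    (hM : Multiset.map l Finset.univ.val = Multiset.replicate (n - 1) μ + {ν}) :
    elemSym n j l = ((n-1).choose j) * μ ^ j + ν * (((n-1).choose (j-1)) * μ ^ (j-1)) := by
  have h1 : elemSym n j l = (Multiset.map l Finset.univ.val).esymm j := by
    rw [Finset.esymm_map_val]; rfl
  rw [h1, hM]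
  have h2 : Multiset.replicate (n-1) μ + {ν} = ν ::ₘ Multiset.replicate (n-1) μ := by
    rw [add_comm, Multiset.singleton_add]
  rw [h2]
  obtain ⟨j', rfl⟩ : ∃ j', j = j' + 1 := ⟨j - 1, by omega⟩
  rw [my_esymm_cons, my_esymm_replicate, my_esymm_replicate]
  simp

lemma my_choose_id (n k j : ℕ) (hj : 1 ≤ j) (hjn : j ≤ n) :
    (j : ℝ) * ((k : ℝ) * ((n-1).choose j) + ((k : ℝ) - n) * ((n-1).choose (j-1)))
      = (n : ℝ) * ((k : ℝ) - j) * ((n-1).choose (j-1)) := by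
  have h := Nat.choose_succ_right_eq (n - 1) (j - 1)
  have hj1 : j - 1 + 1 = j := by omega
  rw [hj1] at h
  have h2 : n - 1 - (j - 1) = n - j := by omega
  rw [h2] at h
  have hc : ((n-1).choose j : ℝ) * j = ((n-1).choose (j-1) : ℝ) * ((n:ℝ) - j) := by
    have := congrArg (Nat.cast : ℕ → ℝ) h
    push_cast [Nat.cast_sub hjn] at this
    linarith
  linear_combination (k : ℝ) * hc


lemma my_det_rank_one (n : ℕ) (hn : 1 ≤ n) (v : Fin n → ℝ) (c e : ℝ) (he : e ≠ 0) :
    Matrix.det (e • (1 : Matrix (Fin n) (Fin n) ℝ) + c • Matrix.vecMulVec v v)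
      = e ^ (n - 1) * (e + c * ∑ i, v i ^ 2) := by
  have h1 : e • (1 : Matrix (Fin n) (Fin n) ℝ) + c • Matrix.vecMulVec v v
      = e • ((1 : Matrix (Fin n) (Fin n) ℝ) + Matrix.vecMulVec ((c / e) • v) v) := by
    rw [smul_add]
    congr 1
    ext i j
    simp [Matrix.vecMulVec_apply]
    field_simp
  rw [h1, Matrix.det_smul, Matrix.vecMulVec_eq (Fin 1), Matrix.det_one_add_replicateCol_mul_replicateRow]
  have hdot : dotProduct v ((c / e) • v) = (c / e) * ∑ i, v i ^ 2 := by
    simp [dotProduct, Finset.mul_sum]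
    apply Finset.sum_congr rfl
    intro i _
    ring
  rw [hdot, Fintype.card_fin]
  have hpow : e ^ n = e ^ (n - 1) * e := by
    conv_lhs => rw [show n = (n - 1) + 1 by omega]
    ring
  rw [hpow]
  field_simp


lemma my_det_sub_eq_prod (n : ℕ) (A : Matrix (Fin n) (Fin n) ℝ) (hA : A.IsHermitian) (t : ℝ) :
    Matrix.det (t • (1 : Matrix (Fin n) (Fin n) ℝ) - A) = ∏ i, (t - hA.eigenvalues i) := by
  set U : Matrix (Fin n) (Fin n) ℝ := (hA.eigenvectorUnitary : Matrix (Fin n) (Fin n) ℝ)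
  have hU : U * star U = 1 := Matrix.mem_unitaryGroup_iff.mp hA.eigenvectorUnitary.2
  have hA' : A = U * Matrix.diagonal (RCLike.ofReal ∘ hA.eigenvalues) * star U := by
    conv_lhs => rw [hA.spectral_theorem]
    rfl
  have key : t • (1 : Matrix (Fin n) (Fin n) ℝ) - A
      = U * (t • (1 : Matrix (Fin n) (Fin n) ℝ) - Matrix.diagonal (RCLike.ofReal ∘ hA.eigenvalues)) * star U := by
    rw [Matrix.mul_sub, Matrix.sub_mul, Matrix.mul_smul, Matrix.mul_one, Matrix.smul_mul, hU,
      ← hA']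
  rw [key, Matrix.det_mul, Matrix.det_mul]
  have hdetU : Matrix.det U * Matrix.det (star U) = 1 := by
    rw [← Matrix.det_mul, hU, Matrix.det_one]
  have hdiag : t • (1 : Matrix (Fin n) (Fin n) ℝ) - Matrix.diagonal (RCLike.ofReal ∘ hA.eigenvalues)
      = Matrix.diagonal (fun i => t - hA.eigenvalues i) := by
    ext i j
    by_cases h : i = j <;> simp [h, Matrix.one_apply, Matrix.diagonal_apply]
  rw [hdiag, Matrix.det_diagonal]
  calc Matrix.det U * (∏ i, (t - hA.eigenvalues i)) * Matrix.det (star U)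
      = (Matrix.det U * Matrix.det (star U)) * ∏ i, (t - hA.eigenvalues i) := by ring
    _ = ∏ i, (t - hA.eigenvalues i) := by rw [hdetU, one_mul]

lemma my_eigen_multiset (n : ℕ) (hn : 1 ≤ n) (A : Matrix (Fin n) (Fin n) ℝ)
    (hA : A.IsHermitian) (μ ν : ℝ)
    (hdet : ∀ t : ℝ, t ≠ μ →
      Matrix.det (t • (1 : Matrix (Fin n) (Fin n) ℝ) - A) = (t - μ) ^ (n - 1) * (t - ν)) :
    Multiset.map hA.eigenvalues Finset.univ.val = Multiset.replicate (n - 1) μ + {ν} := by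
  set p : Polynomial ℝ := (Multiset.map hA.eigenvalues Finset.univ.val).map
    (fun a => Polynomial.X - Polynomial.C a) |>.prod with hp
  set q : Polynomial ℝ := (Polynomial.X - Polynomial.C μ) ^ (n - 1) * (Polynomial.X - Polynomial.C ν) with hq
  have hpq : p = q := by
    apply Polynomial.eq_of_infinite_eval_eq
    apply Set.Infinite.mono (s := {μ}ᶜ)
    · intro t ht
      have ht' : t ≠ μ := ht
      have h1 : Polynomial.eval t p = ∏ i, (t - hA.eigenvalues i) := by
        rw [hp]
        rw [Polynomial.eval_multiset_prod, Multiset.map_map, Multiset.map_map,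
          Finset.prod_eq_multiset_prod]
        simp [Function.comp_def]
      have h2 : Polynomial.eval t q = (t - μ) ^ (n - 1) * (t - ν) := by simp [hq]
      simp only [Set.mem_setOf_eq, h1, h2]
      rw [← my_det_sub_eq_prod n A hA t, hdet t ht']
    · exact Set.Finite.infinite_compl (Set.finite_singleton μ)
  have hroots : p.roots = q.roots := by rw [hpq]
  rw [hp, hq] at hroots
  rw [Polynomial.roots_multiset_prod_X_sub_C] at hroots
  rw [hroots]
  have hq0 : ((Polynomial.X - Polynomial.C μ) ^ (n-1) : Polynomial ℝ) ≠ 0 :=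
    pow_ne_zero _ (Polynomial.X_sub_C_ne_zero μ)
  rw [Polynomial.roots_mul (mul_ne_zero hq0 (Polynomial.X_sub_C_ne_zero ν)),
    Polynomial.roots_pow, Polynomial.roots_X_sub_C, Polynomial.roots_X_sub_C,
    Multiset.nsmul_singleton]



section radial

variable {n : ℕ}

local notation "E" => EuclideanSpace ℝ (Fin n)

lemma my_hasFDerivAt_normsq (y : E) :
    HasFDerivAt (fun z : E => ‖z‖ ^ 2) ((2 : ℝ) • (innerSL ℝ y : E →L[ℝ] ℝ)) y := by
  have h := (hasStrictFDerivAt_norm_sq y).hasFDerivAt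
  exact h.congr_fderiv (by ext v; simp)

lemma my_hessian_radial (h h' h'' : ℝ → ℝ)
    (Hd : ∀ s : ℝ, 0 < s → HasDerivAt h (h' s) s)
    (Hd' : ∀ s : ℝ, 0 < s → HasDerivAt h' (h'' s) s)
    (w : E → ℝ) (hweq : ∀ y : E, w y = h (‖y‖ ^ 2)) (x : E) (hx : x ≠ 0) :
    hessianMatrix n w x = fun i j =>
      4 * h'' (‖x‖ ^ 2) * x i * x j + (if i = j then 2 * h' (‖x‖ ^ 2) else 0) := by
  have hwfun : w = fun y => h (‖y‖ ^ 2) := funext hweq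
  have hpos : ∀ y : E, y ≠ 0 → (0:ℝ) < ‖y‖ ^ 2 := fun y hy =>
    pow_pos (norm_pos_iff.mpr hy) 2
  -- first derivative
  have hW : ∀ y : E, y ≠ 0 →
      HasFDerivAt w ((h' (‖y‖ ^ 2)) • ((2 : ℝ) • (innerSL ℝ y : E →L[ℝ] ℝ))) y := by
    intro y hy
    rw [hwfun]
    exact (Hd _ (hpos y hy)).comp_hasFDerivAt y (my_hasFDerivAt_normsq y)
  have hfd1 : ∀ (j : Fin n), ∀ y : E, y ≠ 0 →
      fderiv ℝ w y (EuclideanSpace.single j (1:ℝ)) = 2 * h' (‖y‖ ^ 2) * y j := by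
    intro j y hy
    rw [(hW y hy).fderiv]
    simp only [ContinuousLinearMap.smul_apply, innerSL_apply_apply, smul_eq_mul]
    rw [EuclideanSpace.inner_single_right]
    simp
    ring
  funext i j
  show fderiv ℝ (fun y => fderiv ℝ w y (EuclideanSpace.single j (1:ℝ))) x
    (EuclideanSpace.single i (1:ℝ)) = _
  have hev : (fun y => fderiv ℝ w y (EuclideanSpace.single j (1:ℝ)))
      =ᶠ[nhds x] (fun y => 2 * h' (‖y‖ ^ 2) * y j) := by
    filter_upwards [IsOpen.mem_nhds isOpen_compl_singleton hx] with y hy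
    exact hfd1 j y hy
  rw [hev.fderiv_eq]
  -- second derivative
  have hf1 : HasFDerivAt (fun y : E => 2 * h' (‖y‖ ^ 2))
      ((2:ℝ) • ((h'' (‖x‖ ^ 2)) • ((2 : ℝ) • (innerSL ℝ x : E →L[ℝ] ℝ)))) x :=
    ((Hd' _ (hpos x hx)).comp_hasFDerivAt x (my_hasFDerivAt_normsq x)).const_mul 2
  have hf2 : HasFDerivAt (fun y : E => y j) (EuclideanSpace.proj (𝕜 := ℝ) j) x :=
    (EuclideanSpace.proj (𝕜 := ℝ) j).hasFDerivAt
  have hmul := hf1.fun_mul hf2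
  have hproj : ∀ a b : Fin n,
      (EuclideanSpace.proj (𝕜 := ℝ) a) (EuclideanSpace.single b (1:ℝ)) = if a = b then 1 else 0 := by
    intro a b
    have : (EuclideanSpace.proj (𝕜 := ℝ) a) (EuclideanSpace.single b (1:ℝ))
        = EuclideanSpace.single b (1:ℝ) a := rfl
    rw [this, EuclideanSpace.single_apply]
  rw [hmul.fderiv]
  simp only [ContinuousLinearMap.add_apply, ContinuousLinearMap.smul_apply, smul_eq_mul,
    innerSL_apply_apply, hproj, EuclideanSpace.inner_single_right, RCLike.inner_apply,
    starRingEnd_apply, star_trivial, map_one, one_mul]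
  by_cases hij : i = j
  · subst hij
    simp only [eq_self_iff_true, if_true, ite_true]
    ring
  · simp only [if_neg (Ne.symm hij), if_neg hij]
    ring

lemma my_norm_sq_eq_sum (n : ℕ) (x : EuclideanSpace ℝ (Fin n)) :
    ∑ i, x i ^ 2 = ‖x‖ ^ 2 := by
  rw [EuclideanSpace.norm_eq, Real.sq_sqrt (by positivity)]
  simp [Real.norm_eq_abs, sq_abs]

lemma my_master (n k : ℕ) (hn : 2 ≤ n) (hk : 1 ≤ k) (hkn : k ≤ n)
    (w : EuclideanSpace ℝ (Fin n) → ℝ) (x : EuclideanSpace ℝ (Fin n)) (hx : x ≠ 0)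
    (h h' h'' : ℝ → ℝ)
    (Hd : ∀ s : ℝ, 0 < s → HasDerivAt h (h' s) s)
    (Hd' : ∀ s : ℝ, 0 < s → HasDerivAt h' (h'' s) s)
    (hweq : ∀ y : EuclideanSpace ℝ (Fin n), w y = h (‖y‖ ^ 2))
    (hd : 0 < 2 * h' (‖x‖ ^ 2))
    (hν : 2 * h' (‖x‖ ^ 2) + 4 * h'' (‖x‖ ^ 2) * (‖x‖ ^ 2)
      = (1 - (n : ℝ) / (k : ℝ)) * (2 * h' (‖x‖ ^ 2))) :
    ∃ hH : (hessianMatrix n w x).IsHermitian,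
      (∀ j, 1 ≤ j → j ≤ k - 1 → 0 < elemSym n j hH.eigenvalues) ∧
      elemSym n k hH.eigenvalues = 0 := by
  set s : ℝ := ‖x‖ ^ 2 with hsdef
  set c : ℝ := 4 * h'' s with hcdef
  set d : ℝ := 2 * h' s with hddef
  set ν : ℝ := d + c * s with hνdef
  have hmat : hessianMatrix n w x
      = c • Matrix.vecMulVec (fun i => x i) (fun i => x i) + d • (1 : Matrix (Fin n) (Fin n) ℝ) := by
    rw [my_hessian_radial h h' h'' Hd Hd' w hweq x hx]
    funext i j
    simp only [Matrix.add_apply, Matrix.smul_apply, Matrix.vecMulVec_apply, Matrix.one_apply,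
      smul_eq_mul, mul_ite, mul_one, mul_zero]
    simp only [hcdef, hddef, hsdef]
    ring_nf
  have hH : (hessianMatrix n w x).IsHermitian := by
    rw [hmat]
    unfold Matrix.IsHermitian
    ext i j
    simp only [Matrix.conjTranspose_apply, Matrix.add_apply, Matrix.smul_apply,
      Matrix.vecMulVec_apply, Matrix.one_apply, smul_eq_mul, star_trivial]
    by_cases hij : i = j
    · subst hij; ring
    · simp only [if_neg hij, if_neg (Ne.symm hij)]; ring
  refine ⟨hH, ?_⟩
  -- determinant formula
  have hS : ∑ i, (fun i => x i) i ^ 2 = s := my_norm_sq_eq_sum n x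
  have hdet : ∀ t : ℝ, t ≠ d →
      Matrix.det (t • (1 : Matrix (Fin n) (Fin n) ℝ) - hessianMatrix n w x)
        = (t - d) ^ (n - 1) * (t - ν) := by
    intro t ht
    have : t • (1 : Matrix (Fin n) (Fin n) ℝ) - hessianMatrix n w x
        = (t - d) • (1 : Matrix (Fin n) (Fin n) ℝ)
          + (-c) • Matrix.vecMulVec (fun i => x i) (fun i => x i) := by
      rw [hmat]; module
    rw [this, my_det_rank_one n (by omega) _ (-c) (t - d) (sub_ne_zero.mpr ht), hS]
    rw [hνdef]; ring
  have hmult : Multiset.map hH.eigenvalues Finset.univ.val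
      = Multiset.replicate (n - 1) d + {ν} :=
    my_eigen_multiset n (by omega) _ hH d ν hdet
  -- eigenvalue formula
  have hkpos : (0:ℝ) < k := by exact_mod_cast hk
  have key : ∀ j : ℕ, 1 ≤ j → j ≤ k →
      elemSym n j hH.eigenvalues
        = d ^ j * ((n : ℝ) * ((k : ℝ) - j) * ((n-1).choose (j-1)) / (j * k)) := by
    intro j hj1 hjk
    rw [my_elemSym_of_multiset n hH.eigenvalues d ν j hj1 hmult]
    have hνval : ν = (1 - (n : ℝ) / (k : ℝ)) * d := hν
    have hdj : d ^ j = d ^ (j - 1) * d := by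
      conv_lhs => rw [show j = (j - 1) + 1 by omega]
      ring
    rw [hνval]
    have hid := my_choose_id n k j hj1 (le_trans hjk hkn)
    have hjpos : (0:ℝ) < j := by exact_mod_cast hj1
    have hscalar : (((n-1).choose j : ℝ) + (1 - (n:ℝ)/(k:ℝ)) * ((n-1).choose (j-1)))
        = (n : ℝ) * ((k : ℝ) - j) * ((n-1).choose (j-1)) / (j * k) := by
      rw [eq_div_iff (by positivity)]
      have hk' : (n:ℝ) / k * k = n := div_mul_cancel₀ _ hkpos.ne'
      linear_combination hid + (-(j:ℝ) * ((n-1).choose (j-1) : ℝ)) * hk'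
    calc (((n-1).choose j : ℝ)) * d ^ j + (1 - (n:ℝ)/(k:ℝ)) * d * (((n-1).choose (j-1)) * d ^ (j-1))
        = d ^ j * (((n-1).choose j : ℝ) + (1 - (n:ℝ)/(k:ℝ)) * ((n-1).choose (j-1))) := by
          rw [hdj]; ring
      _ = d ^ j * ((n : ℝ) * ((k : ℝ) - j) * ((n-1).choose (j-1)) / (j * k)) := by rw [hscalar]
  constructor
  · intro j hj1 hjk
    have hjk' : j ≤ k := by omega
    rw [key j hj1 hjk']
    have hjltk : (j : ℝ) < k := by exact_mod_cast (by omega : j < k)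
    have hjpos : (0:ℝ) < j := by exact_mod_cast hj1
    have hchoose : (0:ℝ) < ((n-1).choose (j-1) : ℝ) := by
      exact_mod_cast Nat.choose_pos (by omega : j - 1 ≤ n - 1)
    have hnpos : (0:ℝ) < n := by positivity
    have hdpos : (0:ℝ) < d := hd
    have hfrac : (0:ℝ) < (n : ℝ) * ((k : ℝ) - j) * ((n-1).choose (j-1)) / (j * k) := by
      apply div_pos
      · exact mul_pos (mul_pos hnpos (by linarith)) hchoose
      · positivity
    exact mul_pos (pow_pos hdpos j) hfrac
  · rw [key k hk le_rfl]
    simp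


/-- the fundamental solution w_k of the k-Hessian equation is smooth away
from the origin, its Hessian eigenvalues satisfy σ_j > 0 for 1 ≤ j ≤ k-1 and σ_k = 0; in
particular it is k-admissible and solves S_k(D²w_k) = 0 on ℝⁿ∖{0}. -/
theorem fundamental_solution_kHessian (n k : ℕ) (hn : 2 ≤ n) (hk : 1 ≤ k) (hkn : k ≤ n)
    (w : EuclideanSpace ℝ (Fin n) → ℝ)
    (hw : w = fun x => if n < 2 * k then ‖x‖ ^ (2 - (n : ℝ) / (k : ℝ))
        else if n = 2 * k then Real.log ‖x‖
        else -‖x‖ ^ (2 - (n : ℝ) / (k : ℝ))) :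
    ContDiffOn ℝ (⊤ : ℕ∞) w {x | x ≠ 0} ∧
    ∀ x : EuclideanSpace ℝ (Fin n), x ≠ 0 →
      ∃ hH : (hessianMatrix n w x).IsHermitian,
        (∀ j, 1 ≤ j → j ≤ k - 1 → 0 < elemSym n j hH.eigenvalues) ∧
        elemSym n k hH.eigenvalues = 0 := by
  have hk0 : (0:ℝ) < k := by exact_mod_cast hk
  set α : ℝ := 2 - (n : ℝ) / (k : ℝ) with hαr
  constructor
  · -- smoothness
    intro x hx
    have hx' : x ≠ 0 := hx
    have hnx : ‖x‖ ≠ 0 := norm_ne_zero_iff.mpr hx'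
    apply ContDiffAt.contDiffWithinAt
    rw [hw]
    rcases lt_trichotomy n (2 * k) with hc | hc | hc
    · simp only [if_pos hc]
      exact (Real.contDiffAt_rpow_const_of_ne hnx).comp x (contDiffAt_norm ℝ hx')
    · simp only [if_neg (by omega : ¬ n < 2 * k), if_pos hc]
      exact (Real.contDiffAt_log.mpr hnx).comp x (contDiffAt_norm ℝ hx')
    · simp only [if_neg (by omega : ¬ n < 2 * k), if_neg (by omega : ¬ n = 2 * k)]
      exact ((Real.contDiffAt_rpow_const_of_ne hnx).comp x (contDiffAt_norm ℝ hx')).neg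
  · intro x hx
    have hs : (0:ℝ) < ‖x‖ ^ 2 := pow_pos (norm_pos_iff.mpr hx) 2
    rcases lt_trichotomy n (2 * k) with hc | hc | hc
    · -- case 2k > n
      have hα : 0 < α := by
        rw [hαr]
        have h2 : (n:ℝ) < 2 * k := by exact_mod_cast hc
        have : (n : ℝ) / k < 2 := by
          rw [div_lt_iff₀ hk0]
          linarith
        linarith
      apply my_master n k hn hk hkn w x hx
        (fun s => s ^ (α/2)) (fun s => α/2 * s ^ (α/2 - 1))
        (fun s => α/2 * ((α/2 - 1) * s ^ (α/2 - 1 - 1)))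
      · intro s hs
        exact Real.hasDerivAt_rpow_const (Or.inl hs.ne')
      · intro s hs
        exact (Real.hasDerivAt_rpow_const (Or.inl hs.ne')).const_mul (α/2)
      · intro y
        rw [hw]
        simp only [if_pos hc]
        conv_rhs => rw [← Real.rpow_natCast ‖y‖ 2, ← Real.rpow_mul (norm_nonneg y)]
        congr 1
        push_cast
        ring
      · have := Real.rpow_pos_of_pos hs (α/2 - 1)
        nlinarith [mul_pos hα this]
      · have e1 : (‖x‖^2 : ℝ) ^ (α/2 - 1 - 1) * ‖x‖^2 = (‖x‖^2 : ℝ) ^ (α/2 - 1) := by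
          conv_rhs => rw [show α/2 - 1 = (α/2 - 1 - 1) + 1 by ring, Real.rpow_add hs,
            Real.rpow_one]
        linear_combination (α*(α-2)) * e1 + (α * (‖x‖^2 : ℝ) ^ (α/2 - 1)) * hαr
    · -- case 2k = n
      have hnk : (n : ℝ) / k = 2 := by
        rw [hc]
        push_cast
        field_simp
      apply my_master n k hn hk hkn w x hx
        (fun s => Real.log s / 2) (fun s => s⁻¹ / 2) (fun s => -(s^2)⁻¹ / 2)
      · intro s hs
        exact (Real.hasDerivAt_log hs.ne').div_const 2
      · intro s hs
        exact (hasDerivAt_inv hs.ne').div_const 2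
      · intro y
        rw [hw]
        simp only [if_neg (by omega : ¬ n < 2 * k), if_pos hc]
        rw [Real.log_pow]
        push_cast
        ring
      · positivity
      · rw [hnk]
        field_simp
        ring
    · -- case 2k < n
      have hα : α < 0 := by
        rw [hαr]
        have h2 : (2:ℝ) * k < n := by exact_mod_cast hc
        have : (2:ℝ) < (n : ℝ) / k := by
          rw [lt_div_iff₀ hk0]
          linarith
        linarith
      apply my_master n k hn hk hkn w x hx
        (fun s => -(s ^ (α/2))) (fun s => -(α/2 * s ^ (α/2 - 1)))
        (fun s => -(α/2 * ((α/2 - 1) * s ^ (α/2 - 1 - 1))))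
      · intro s hs
        exact (Real.hasDerivAt_rpow_const (Or.inl hs.ne')).neg
      · intro s hs
        exact ((Real.hasDerivAt_rpow_const (Or.inl hs.ne')).const_mul (α/2)).neg
      · intro y
        rw [hw]
        simp only [if_neg (by omega : ¬ n < 2 * k), if_neg (by omega : ¬ n = 2 * k)]
        congr 1
        conv_rhs => rw [← Real.rpow_natCast ‖y‖ 2, ← Real.rpow_mul (norm_nonneg y)]
        congr 1
        push_cast
        ring
      · have := Real.rpow_pos_of_pos hs (α/2 - 1)
        nlinarith [mul_pos (neg_pos.mpr hα) this]
      · have e1 : (‖x‖^2 : ℝ) ^ (α/2 - 1 - 1) * ‖x‖^2 = (‖x‖^2 : ℝ) ^ (α/2 - 1) := by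
          conv_rhs => rw [show α/2 - 1 = (α/2 - 1 - 1) + 1 by ring, Real.rpow_add hs,
            Real.rpow_one]
        linear_combination (-(α*(α-2))) * e1 + (-(α * (‖x‖^2 : ℝ) ^ (α/2 - 1))) * hαr
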